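/- Let Γ_g = [[0, Z],[Zᵀ, 0]] be a symmetric block matrix and let B be a symmetric 2^N×2^N matrix indexed by {0,1}^N. If the composition C of B with N copies of Z is formed, and φ ∈ ℝ^{(m+n)^N → ℝ} is defined by φ(a) = χ(ã) for some χ : {0,1}^N → {0,1}, then C ∘ φφᵀ = (B̃ ∘ φφᵀ) ∘ (⊗^N Γ̂_g); in particular if B ∘ χχᵀ ⪯ 0 then C ∘ φφᵀ ⪯ 0. -/

import Mathlib

open Matrix

/-- The spectral norm (largest singular value) of a real matrix. -/
noncomputable def realMatrixSpectralNorm {m n : Type*} [Fintype m] [Fintype n] [DecidableEq n]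
    (A : Matrix m n ℝ) : ℝ :=
  ‖LinearMap.toContinuousLinearMap (Matrix.toEuclideanLin A)‖

/-- `hatMatrix Z = [[‖Z‖·I, Z], [Zᵀ, ‖Z‖·I]]`. -/
noncomputable def hatMatrix {m n : ℕ} (Z : Matrix (Fin m) (Fin n) ℝ) :
    Matrix (Fin m ⊕ Fin n) (Fin m ⊕ Fin n) ℝ :=
  Matrix.fromBlocks (realMatrixSpectralNorm Z • (1 : Matrix (Fin m) (Fin m) ℝ)) Z
    Zᵀ (realMatrixSpectralNorm Z • (1 : Matrix (Fin n) (Fin n) ℝ))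

/-- The matrix composition `C` of `B` with `N` copies of `Z`:
`C a b = B ã b̃ · ∏ i, Ẑ (a i) (b i)`, where `ã i = 1` iff `a i` lies in the second summand. -/
noncomputable def compN {N m n : ℕ}
    (B : Matrix (Fin N → Bool) (Fin N → Bool) ℝ) (Z : Matrix (Fin m) (Fin n) ℝ) :
    Matrix (Fin N → Fin m ⊕ Fin n) (Fin N → Fin m ⊕ Fin n) ℝ :=
  Matrix.of fun a b =>
    B (fun i => (a i).isRight) (fun i => (b i).isRight) * ∏ i, hatMatrix Z (a i) (b i)

theorem schurAux {ι : Type*} [Fintype ι] [DecidableEq ι] {A B : Matrix ι ι ℝ}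
    (hA : A.PosSemidef) (hB : B.PosSemidef) :
    (Matrix.of fun i j => A i j * B i j).PosSemidef := by
  obtain ⟨C, hC⟩ : ∃ C : Matrix ι ι ℝ, A = Cᴴ * C := by
    open MatrixOrder in exact CStarAlgebra.nonneg_iff_eq_star_mul_self.mp hA.nonneg
  refine Matrix.PosSemidef.of_dotProduct_mulVec_nonneg ?_ ?_
  · ext i j
    simp only [conjTranspose_apply, of_apply, star_trivial]
    rw [← hA.1.apply i j, ← hB.1.apply i j]
    simp
  · intro x
    have key : dotProduct (star x) ((Matrix.of fun i j => A i j * B i j) *ᵥ x)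
        = ∑ k, dotProduct (star fun i => C k i * x i) (B *ᵥ fun i => C k i * x i) := by
      simp only [dotProduct, mulVec, of_apply, star_trivial, Pi.star_apply, hC,
        Matrix.mul_apply, conjTranspose_apply, Finset.sum_mul, Finset.mul_sum]
      conv_lhs => rw [show (∑ i, ∑ j, ∑ k, x i * (C k i * C k j * B i j * x j))
        = ∑ i, ∑ k, ∑ j, x i * (C k i * C k j * B i j * x j)
        from Finset.sum_congr rfl fun i _ => Finset.sum_comm ..]
      rw [Finset.sum_comm]
      refine Finset.sum_congr rfl fun k _ => Finset.sum_congr rfl fun i _ =>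
        Finset.sum_congr rfl fun j _ => by ring
    rw [key]
    exact Finset.sum_nonneg fun k _ => hB.dotProduct_mulVec_nonneg _

theorem allOnesPSD {κ : Type*} [Fintype κ] :
    (Matrix.of fun _ _ : κ => (1 : ℝ)).PosSemidef := by
  refine Matrix.PosSemidef.of_dotProduct_mulVec_nonneg ?_ ?_
  · ext i j; simp
  · intro x
    have : dotProduct (star x) ((Matrix.of fun _ _ : κ => (1 : ℝ)) *ᵥ x)
        = (∑ i, x i) * (∑ j, x j) := by
      simp [dotProduct, mulVec, Finset.sum_mul]
    rw [this]
    exact mul_self_nonneg _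

lemma dot_bound {m n : ℕ} (Z : Matrix (Fin m) (Fin n) ℝ) (x : Fin m → ℝ) (y : Fin n → ℝ) :
    |dotProduct x (Z *ᵥ y)| ≤
      realMatrixSpectralNorm Z * (Real.sqrt (∑ i, x i ^ 2) * Real.sqrt (∑ j, y j ^ 2)) := by
  set x' : EuclideanSpace ℝ (Fin m) := (WithLp.equiv 2 (Fin m → ℝ)).symm x
  set y' : EuclideanSpace ℝ (Fin n) := (WithLp.equiv 2 (Fin n → ℝ)).symm y
  have hx : ‖x'‖ = Real.sqrt (∑ i, x i ^ 2) := by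
    rw [EuclideanSpace.norm_eq]
    congr 1
    exact Finset.sum_congr rfl fun i _ => by simp [x', sq_abs]
  have hy : ‖y'‖ = Real.sqrt (∑ j, y j ^ 2) := by
    rw [EuclideanSpace.norm_eq]
    congr 1
    exact Finset.sum_congr rfl fun j _ => by simp [y', sq_abs]
  have hdp : dotProduct x (Z *ᵥ y) =
      (inner ℝ x' ((LinearMap.toContinuousLinearMap (Matrix.toEuclideanLin Z)) y') : ℝ) := by
    rw [LinearMap.coe_toContinuousLinearMap']
    rw [show (Matrix.toEuclideanLin Z) y' = (WithLp.equiv 2 (Fin m → ℝ)).symm (Z *ᵥ y) from rfl]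
    rw [PiLp.inner_apply]
    simp [dotProduct, x', mul_comm]
  rw [hdp]
  calc |(inner ℝ x' ((LinearMap.toContinuousLinearMap (Matrix.toEuclideanLin Z)) y') : ℝ)|
      ≤ ‖x'‖ * ‖(LinearMap.toContinuousLinearMap (Matrix.toEuclideanLin Z)) y'‖ :=
        abs_real_inner_le_norm _ _
    _ ≤ ‖x'‖ * (realMatrixSpectralNorm Z * ‖y'‖) := by
        gcongr
        exact (LinearMap.toContinuousLinearMap (Matrix.toEuclideanLin Z)).le_opNorm y'
    _ = realMatrixSpectralNorm Z * (Real.sqrt (∑ i, x i ^ 2) * Real.sqrt (∑ j, y j ^ 2)) := by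
        rw [hx, hy]; ring

theorem hatPSD {m n : ℕ} (Z : Matrix (Fin m) (Fin n) ℝ) : (hatMatrix Z).PosSemidef := by
  refine Matrix.PosSemidef.of_dotProduct_mulVec_nonneg ?_ ?_
  · show (hatMatrix Z)ᴴ = hatMatrix Z
    unfold hatMatrix
    ext (i|i) (j|j) <;>
      simp [conjTranspose_apply, fromBlocks, Matrix.one_apply, eq_comm]
  · intro v
    set s := realMatrixSpectralNorm Z with hs
    have hs0 : 0 ≤ s := norm_nonneg _
    set x : Fin m → ℝ := fun i => v (Sum.inl i)
    set y : Fin n → ℝ := fun j => v (Sum.inr j)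
    have hv : v = Sum.elim x y := by ext (i|j) <;> rfl
    rw [star_trivial, hv]
    unfold hatMatrix
    rw [fromBlocks_mulVec, sumElim_dotProduct_sumElim]
    simp only [smul_mulVec, one_mulVec, dotProduct_add, dotProduct_smul,
      smul_eq_mul, Sum.elim_comp_inl, Sum.elim_comp_inr]
    have hXX : dotProduct x x = ∑ i, x i ^ 2 := by simp [dotProduct, sq]
    have hYY : dotProduct y y = ∑ j, y j ^ 2 := by simp [dotProduct, sq]
    have hsym : dotProduct y (Zᵀ *ᵥ x) = dotProduct x (Z *ᵥ y) := by
      rw [dotProduct_mulVec, vecMul_transpose, dotProduct_comm]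
    rw [hXX, hYY, hsym]
    have hb := dot_bound Z x y
    set p := Real.sqrt (∑ i, x i ^ 2) with hp
    set q := Real.sqrt (∑ j, y j ^ 2) with hq
    have hp2 : p ^ 2 = ∑ i, x i ^ 2 := Real.sq_sqrt (by positivity)
    have hq2 : q ^ 2 = ∑ j, y j ^ 2 := Real.sq_sqrt (by positivity)
    have hpq := abs_le.mp hb
    nlinarith [sq_nonneg (p - q), sq_nonneg (p + q), hpq.1, hpq.2, hp2, hq2,
      mul_nonneg hs0 (sq_nonneg (p - q))]

theorem prodPSD {N m n : ℕ} (Z : Matrix (Fin m) (Fin n) ℝ) (s : Finset (Fin N)) :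
    (Matrix.of fun a b : Fin N → Fin m ⊕ Fin n =>
      ∏ i ∈ s, hatMatrix Z (a i) (b i)).PosSemidef := by
  classical
  induction s using Finset.induction_on with
  | empty => simpa using allOnesPSD
  | @insert i s hi ih =>
    have h1 : ((hatMatrix Z).submatrix (fun a : Fin N → Fin m ⊕ Fin n => a i)
        (fun a : Fin N → Fin m ⊕ Fin n => a i)).PosSemidef := (hatPSD Z).submatrix _
    have := schurAux h1 ih
    convert this using 2 with a b
    simp [Finset.prod_insert hi, submatrix_apply]

/-- Let `C` be the composition of a symmetric matrix `B` (indexed by `{0,1}^N`) with `N` copies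
of `Z`, and let `φ a = χ ã` for a `0/1`-valued `χ`.  Then
`C ∘ φφᵀ = (B̃ ∘ φφᵀ) ∘ (⊗^N Ẑ)`, and if `B ∘ χχᵀ ⪯ 0` then `C ∘ φφᵀ ⪯ 0`. -/
theorem stmt11 {N m n : ℕ} (Z : Matrix (Fin m) (Fin n) ℝ)
    (B : Matrix (Fin N → Bool) (Fin N → Bool) ℝ) (hB : B.IsSymm)
    (χ : (Fin N → Bool) → ℝ) (hχ : ∀ x, χ x = 0 ∨ χ x = 1) :
    ((Matrix.of fun a b : Fin N → Fin m ⊕ Fin n =>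
        compN B Z a b * (χ (fun i => (a i).isRight) * χ (fun i => (b i).isRight)))
      = Matrix.of fun a b : Fin N → Fin m ⊕ Fin n =>
        (B (fun i => (a i).isRight) (fun i => (b i).isRight) *
          (χ (fun i => (a i).isRight) * χ (fun i => (b i).isRight))) *
        ∏ i, hatMatrix Z (a i) (b i)) ∧
    ((-(Matrix.of fun x y : Fin N → Bool => B x y * (χ x * χ y))).PosSemidef →
      (-(Matrix.of fun a b : Fin N → Fin m ⊕ Fin n =>
          compN B Z a b * (χ (fun i => (a i).isRight) * χ (fun i => (b i).isRight)))).PosSemidef) := by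
  constructor
  · ext a b
    simp only [of_apply, compN]
    ring
  · intro h
    have hsub := h.submatrix (fun a : Fin N → Fin m ⊕ Fin n => fun i => (a i).isRight)
    have := schurAux hsub (prodPSD Z Finset.univ)
    convert this using 1
    ext a b
    simp only [of_apply, compN, Matrix.neg_apply, submatrix_apply]
    ring
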